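/- If B(x) = Σ_{n≥1} b_n x^n is the compositional inverse of x/(1+A(x)) where A(x) = Σ_{n≥1} a_n x^n, then b_1 = 1 and for n ≥ 1, b_{n+1} = (1/(n+1)) Σ multinomial(n+1; n+1-Σr_i, r_1, ..., r_n) · a_1^{r_1} a_2^{r_2} ··· a_n^{r_n}, where the sum is over all partitions 1^{r_1} 2^{r_2} ··· n^{r_n} of n (i.e., nonnegative integers r_1,...,r_n with Σ i·r_i = n). -/

import Mathlib

/-- Composition `f ∘ g` (i.e. `f(g(x))`) of formal power series, valid when `g`
has zero constant term. -/
noncomputable def psComp {R : Type*} [CommSemiring R] (f g : PowerSeries R) : PowerSeries R :=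
  PowerSeries.mk fun n =>
    ∑ k ∈ Finset.range (n + 1), PowerSeries.coeff k f * PowerSeries.coeff n (g ^ k)

/-- The Lagrange-inversion partition sum
`∑ multinomial(n+1; n+1-∑rᵢ, r₁,…,rₙ) a₁^{r₁} ⋯ aₙ^{rₙ}` over all
`r₁,…,rₙ ≥ 0` with `∑ i·rᵢ = n` (each `rᵢ ≤ n` automatically). -/
noncomputable def pSum (n : ℕ) (a : ℕ → ℚ) : ℚ :=
  ∑ r ∈ Finset.univ.filter
      (fun r : Fin n → Fin (n + 1) => ∑ i, (i.1 + 1) * (r i).1 = n),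
    ((Nat.factorial (n + 1) : ℚ) /
        ((Nat.factorial (n + 1 - ∑ i, (r i).1) : ℚ) * ∏ i, (Nat.factorial (r i).1 : ℚ))) *
      ∏ i, a (i.1 + 1) ^ (r i).1

open PowerSeries Finset in
private lemma coeff_pow_congr {f g : ℚ⟦X⟧} {n : ℕ} (k : ℕ)
    (h : ∀ m ≤ n, PowerSeries.coeff m f = PowerSeries.coeff m g) :
    PowerSeries.coeff n (f ^ k) = PowerSeries.coeff n (g ^ k) := by
  rw [coeff_pow, coeff_pow]
  refine Finset.sum_congr rfl fun l hl => Finset.prod_congr rfl fun i hi => h _ ?_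
  rw [Finset.mem_finsuppAntidiag] at hl
  calc l i ≤ ∑ j ∈ range k, l j := by
        by_cases hs : i ∈ range k
        · exact Finset.single_le_sum (fun _ _ => Nat.zero_le _) hs
        · have : l i = 0 := Finsupp.notMem_support_iff.mp (fun hc => hs (hl.2 hc))
          simp [this]
    _ = n := hl.1

open PowerSeries Finset in
private lemma lagrange_stepC (a : ℕ → ℚ) (A : PowerSeries ℚ)
    (hA : A = PowerSeries.mk fun n => if n = 0 then 0 else a n)
    (n : ℕ) : PowerSeries.coeff n ((1 + A)^(n+1)) = pSum n a := by
  classical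
  set w : ℕ → ℚ := fun j => if j = 0 then 1 else a j with hw
  clear_value w
  have hcoeff : ∀ m : ℕ, PowerSeries.coeff m (1 + A) = w m := by
    intro m
    rw [hA, map_add, coeff_mk, coeff_one, hw]
    by_cases hm : m = 0 <;> simp [hm]
  set ψ : ℚ⟦X⟧ := ∑ j ∈ range (n+1), PowerSeries.C (w j) * X^j with hψ
  have hcψ : ∀ m : ℕ, m ≤ n → PowerSeries.coeff m ψ = w m := by
    intro m hm
    rw [hψ, map_sum]
    rw [Finset.sum_eq_single m]
    · simp [coeff_C_mul, coeff_X_pow]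
    · intro j _ hj
      simp [coeff_C_mul, coeff_X_pow, Ne.symm hj]
    · intro hm'
      exact absurd (mem_range.mpr (Nat.lt_succ_of_le hm)) hm'
  have h1 : PowerSeries.coeff n ((1+A)^(n+1)) = PowerSeries.coeff n (ψ^(n+1)) :=
    coeff_pow_congr _ (fun m hm => by rw [hcoeff, hcψ m hm])
  rw [h1, hψ, Finset.sum_pow_eq_sum_piAntidiag, map_sum]
  have h2 : ∀ k ∈ piAntidiag (range (n+1)) (n+1),
      coeff n ((Nat.multinomial (range (n+1)) k : ℚ⟦X⟧) *
        ∏ j ∈ range (n+1), (PowerSeries.C (w j) * X^j)^(k j))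
      = if ∑ j ∈ range (n+1), j * k j = n then
          (Nat.multinomial (range (n+1)) k : ℚ) * ∏ j ∈ range (n+1), w j ^ k j else 0 := by
    intro k hk
    have hprod : ∏ j ∈ range (n+1), (PowerSeries.C (w j) * X^j)^(k j)
        = PowerSeries.C (∏ j ∈ range (n+1), w j ^ k j) * X^(∑ j ∈ range (n+1), j * k j) := by
      rw [map_prod, ← prod_pow_eq_pow_sum, ← Finset.prod_mul_distrib]
      refine Finset.prod_congr rfl fun j _ => ?_
      rw [mul_pow, ← map_pow, ← pow_mul, mul_comm j (k j)]
    rw [hprod, ← mul_assoc, ← map_natCast (PowerSeries.C), ← map_mul,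
      coeff_C_mul, coeff_X_pow]
    by_cases h : ∑ j ∈ range (n+1), j * k j = n
    · simp [h]
    · rw [if_neg (fun hc => h hc.symm), if_neg h, mul_zero]
  rw [Finset.sum_congr rfl h2, Finset.sum_ite, Finset.sum_const_zero, add_zero]
  simp only [pSum]
  set toR : (ℕ → ℕ) → (Fin n → Fin (n+1)) :=
    fun k i => ⟨min (k (i.1+1)) n, by omega⟩ with htoR
  set toK : (Fin n → Fin (n+1)) → (ℕ → ℕ) :=
    fun r j => if j = 0 then (n+1) - ∑ i, (r i).1
      else if h : j - 1 < n then (r ⟨j-1, h⟩).1 else 0 with htoK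
  have htoK_succ : ∀ (r : Fin n → Fin (n+1)) (i : Fin n), toK r (i.1+1) = (r i).1 := by
    intro r i
    simp only [htoK, Nat.add_sub_cancel, Nat.succ_ne_zero, if_false, i.isLt, dif_pos]
  have htoK_zero : ∀ (r : Fin n → Fin (n+1)), toK r 0 = (n+1) - ∑ i, (r i).1 := by
    intro r; simp [htoK]
  have hsum_le : ∀ r : Fin n → Fin (n+1), (∑ i, (i.1 + 1) * (r i).1 = n) →
      ∑ i, (r i).1 ≤ n := by
    intro r hr
    calc ∑ i, (r i).1 ≤ ∑ i, (i.1+1) * (r i).1 :=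
          Finset.sum_le_sum (fun i _ => Nat.le_mul_of_pos_left _ (Nat.succ_pos _))
      _ = n := hr
  -- bounds for k in the set
  have hbound : ∀ k, k ∈ (piAntidiag (range (n+1)) (n+1)).filter
      (fun k => ∑ j ∈ range (n+1), j * k j = n) → ∀ i : Fin n, k (i.1+1) ≤ n := by
    intro k hk i
    rw [mem_filter, mem_piAntidiag] at hk
    have h1 : (i.1+1) * k (i.1+1) ≤ ∑ j ∈ range (n+1), j * k j := by
      exact Finset.single_le_sum (f := fun j => j * k j) (fun _ _ => Nat.zero_le _)
        (mem_range.mpr (by omega))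
    have := hk.2
    nlinarith [i.isLt]
  have htoR_eq : ∀ k, k ∈ (piAntidiag (range (n+1)) (n+1)).filter
      (fun k => ∑ j ∈ range (n+1), j * k j = n) → ∀ i : Fin n, (toR k i).1 = k (i.1+1) := by
    intro k hk i
    simp only [htoR, min_eq_left (hbound k hk i)]
  refine Finset.sum_nbij' toR toK ?_ ?_ ?_ ?_ ?_
  · -- maps into r-set
    intro k hk
    rw [mem_filter]
    refine ⟨mem_univ _, ?_⟩
    rw [mem_filter, mem_piAntidiag] at hk
    have : ∑ i : Fin n, (i.1+1) * (toR k i).1 = ∑ i : Fin n, (i.1+1) * k (i.1+1) := by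
      refine Finset.sum_congr rfl fun i _ => ?_
      rw [htoR_eq k (by rw [mem_filter, mem_piAntidiag]; exact hk) i]
    rw [this, Fin.sum_univ_eq_sum_range (fun j => (j+1) * k (j+1)) n]
    have h0 : ∑ j ∈ range (n+1), j * k j = ∑ j ∈ range n, (j+1) * k (j+1) + 0 * k 0 :=
      Finset.sum_range_succ' (fun j => j * k j) n
    omega
  · -- maps into k-set
    intro r hr
    rw [mem_filter] at hr
    have hr2 := hr.2
    have hle := hsum_le r hr2
    rw [mem_filter, mem_piAntidiag]
    have hsum : ∑ j ∈ range (n+1), toK r j = n+1 := by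
      rw [Finset.sum_range_succ' (fun j => toK r j) n]
      have : ∑ j ∈ range n, toK r (j+1) = ∑ i, (r i).1 := by
        rw [← Fin.sum_univ_eq_sum_range (fun j => toK r (j+1)) n]
        exact Finset.sum_congr rfl fun i _ => htoK_succ r i
      rw [this, htoK_zero]
      omega
    refine ⟨⟨hsum, ?_⟩, ?_⟩
    · intro j hj
      rw [mem_range]
      by_contra hc
      apply hj
      simp only [htoK]
      rw [if_neg (by omega), dif_neg (by omega)]
    · calc ∑ j ∈ range (n+1), j * toK r j
          = ∑ j ∈ range n, (j+1) * toK r (j+1) + 0 * toK r 0 :=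
            Finset.sum_range_succ' (fun j => j * toK r j) n
        _ = ∑ i : Fin n, (i.1+1) * toK r (i.1+1) := by
            rw [Fin.sum_univ_eq_sum_range (fun j => (j+1) * toK r (j+1)) n]; ring
        _ = ∑ i, (i.1+1) * (r i).1 := Finset.sum_congr rfl fun i _ => by rw [htoK_succ r i]
        _ = n := hr2
  · -- left inverse
    intro k hk
    funext j
    rcases Nat.eq_zero_or_pos j with hj | hj
    · subst hj
      rw [htoK_zero]
      have : ∑ i, ((toR k) i).1 = ∑ j ∈ range n, k (j+1) := by
        rw [← Fin.sum_univ_eq_sum_range (fun j => k (j+1)) n]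
        exact Finset.sum_congr rfl fun i _ => htoR_eq k hk i
      rw [this]
      rw [mem_filter, mem_piAntidiag] at hk
      have hk1' : ∑ j ∈ range (n+1), k j = n + 1 := hk.1.1
      have h0 : ∑ j ∈ range (n+1), k j = ∑ j ∈ range n, k (j+1) + k 0 :=
        Finset.sum_range_succ' (fun j => k j) n
      omega
    · by_cases hjn : j - 1 < n
      · have hj' : j = (⟨j-1, hjn⟩ : Fin n).1 + 1 := by simp; omega
        rw [hj', htoK_succ, htoR_eq k hk]
      · -- j > n : k j = 0
        rw [mem_filter, mem_piAntidiag] at hk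
        simp only [htoK]
        rw [if_neg (by omega), dif_neg hjn]
        by_contra hc
        have := hk.1.2 j (fun h => hc h.symm)
        rw [mem_range] at this
        omega
  · -- right inverse
    intro r hr
    funext i
    rw [mem_filter] at hr
    apply Fin.ext
    have h1 : (toR (toK r) i).1 = min (toK r (i.1+1)) n := rfl
    rw [h1, htoK_succ r i, min_eq_left (by omega)]
  · -- values agree
    intro k hk
    have hb := htoR_eq k hk
    rw [mem_filter, mem_piAntidiag] at hk
    obtain ⟨⟨hk1, hk2⟩, hk3⟩ := hk
    have hprod_fact : ∏ i, (Nat.factorial ((toR k) i).1 : ℚ)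
        = ∏ j ∈ range n, (Nat.factorial (k (j+1)) : ℚ) := by
      rw [← Fin.prod_univ_eq_prod_range (fun j => (Nat.factorial (k (j+1)) : ℚ)) n]
      exact Finset.prod_congr rfl fun i _ => by rw [hb i]
    have hsum_toR : ∑ i, ((toR k) i).1 = ∑ j ∈ range n, k (j+1) := by
      rw [← Fin.sum_univ_eq_sum_range (fun j => k (j+1)) n]
      exact Finset.sum_congr rfl fun i _ => by rw [hb i]
    have hk0 : k 0 = n + 1 - ∑ j ∈ range n, k (j+1) ∧ ∑ j ∈ range n, k (j+1) ≤ n + 1 := by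
      have hk1' : ∑ j ∈ range (n+1), k j = n + 1 := hk1
      have h0 : ∑ j ∈ range (n+1), k j = ∑ j ∈ range n, k (j+1) + k 0 :=
        Finset.sum_range_succ' (fun j => k j) n
      omega
    have haprod : ∏ i, a (i.1 + 1) ^ ((toR k) i).1 = ∏ j ∈ range n, a (j+1) ^ k (j+1) := by
      rw [← Fin.prod_univ_eq_prod_range (fun j => a (j+1) ^ k (j+1)) n]
      exact Finset.prod_congr rfl fun i _ => by rw [hb i]
    have hwprod : ∏ j ∈ range (n+1), w j ^ k j = ∏ j ∈ range n, a (j+1) ^ k (j+1) := by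
      rw [Finset.prod_range_succ' (fun j => w j ^ k j) n]
      have hw0 : w 0 = 1 := by simp [hw]
      rw [hw0, one_pow, mul_one]
      exact Finset.prod_congr rfl fun j _ => by rw [hw]; simp
    -- multinomial value
    have hspec := Nat.multinomial_spec (range (n+1)) k
    rw [hk1] at hspec
    have hfact : ∏ j ∈ range (n+1), Nat.factorial (k j)
        = Nat.factorial (k 0) * ∏ j ∈ range n, Nat.factorial (k (j+1)) := by
      rw [Finset.prod_range_succ' (fun j => Nat.factorial (k j)) n, mul_comm]
    have hmult : (Nat.multinomial (range (n+1)) k : ℚ)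
        = (Nat.factorial (n+1) : ℚ) /
          ((Nat.factorial (k 0) : ℚ) * ∏ j ∈ range n, (Nat.factorial (k (j+1)) : ℚ)) := by
      rw [eq_div_iff]
      · rw [← hspec, hfact]
        push_cast
        ring
      · refine mul_ne_zero ?_ ?_
        · exact_mod_cast (Nat.factorial_pos _).ne'
        · refine Finset.prod_ne_zero_iff.mpr fun j _ => ?_
          exact_mod_cast (Nat.factorial_pos _).ne'
    rw [hmult, hwprod, hprod_fact, hsum_toR, haprod, hk0.1]

open PowerSeries Finset in
private theorem lagrange_aux (a : ℕ → ℚ) (B : PowerSeries ℚ)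
    (A : PowerSeries ℚ) (hA : A = PowerSeries.mk fun n => if n = 0 then 0 else a n)
    (hBl : psComp B (PowerSeries.X * (1 + A)⁻¹) = PowerSeries.X) :
    PowerSeries.coeff 1 B = 1 ∧
      ∀ n : ℕ, 1 ≤ n →
        PowerSeries.coeff (n + 1) B = (1 / (n + 1 : ℚ)) * pSum n a := by
  classical
  classical
  have hA0 : constantCoeff A = 0 := by
    rw [hA, ← coeff_zero_eq_constantCoeff, coeff_mk]
    simp
  set φ : ℚ⟦X⟧ := 1 + A with hφ
  have hφ0 : constantCoeff φ = 1 := by rw [hφ, map_add, hA0, map_one, add_zero]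
  have hφne : constantCoeff φ ≠ 0 := by rw [hφ0]; exact one_ne_zero
  set u : ℚ⟦X⟧ := φ⁻¹ with hu
  have hu1 : φ * u = 1 := PowerSeries.mul_inv_cancel _ hφne
  have hu0 : constantCoeff u = 1 := by
    rw [hu, PowerSeries.constantCoeff_inv, hφ0, inv_one]
  set b : ℕ → ℚ := fun k => coeff k B with hb
  have hbv : ∀ k, b k = coeff k B := fun k => rfl
  -- the coefficient relations
  have R : ∀ N : ℕ, ∑ k ∈ range (N+1), b k * coeff N ((X*u)^k)
      = if N = 1 then 1 else 0 := by
    intro N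
    have h := congrArg (coeff N) hBl
    rw [psComp, coeff_mk, coeff_X] at h
    exact h
  have hb0 : b 0 = 0 := by
    have := R 0
    simpa using this
  have hXu : coeff 1 (X * u) = 1 := by
    have h01 : (1:ℕ) = 0 + 1 := rfl
    rw [h01, coeff_succ_X_mul, coeff_zero_eq_constantCoeff, hu0]
  have hb1 : b 1 = 1 := by
    have hR := R 1
    rw [Finset.sum_range_succ, Finset.sum_range_one, pow_one, hXu] at hR
    simpa [hb0] using hR
  -- derivative machinery
  set Dφ : ℚ⟦X⟧ := d⁄dX ℚ φ with hDφ
  have hDu : d⁄dX ℚ u = -u^2 * Dφ := by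
    rw [hu, derivative_inv', hDφ]
  clear_value b
  clear hb
  have hDXu : d⁄dX ℚ (X * u) = (φ - X * Dφ) * u^2 := by
    have h1 : d⁄dX ℚ (X * u) = X * (d⁄dX ℚ u) + u * 1 := by
      rw [Derivation.leibniz, derivative_X, smul_eq_mul, smul_eq_mul]
    rw [h1, hDu]
    linear_combination (-u) * hu1
  clear_value u Dφ
  clear hu hBl
  clear_value φ
  set T : ℕ → ℚ⟦X⟧ := fun j => X^j * ((φ - X*Dφ) * u^(j+2)) with hTdef
  have hT : ∀ j : ℕ, d⁄dX ℚ ((X*u)^(j+1)) = PowerSeries.C ((j:ℚ)+1) * T j := by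
    intro j
    rw [Derivation.leibniz_pow (d⁄dX ℚ) (X*u) (j+1), hDXu]
    simp only [Nat.add_sub_cancel, smul_eq_mul, nsmul_eq_mul]
    rw [hTdef]
    have hC : ((j+1 : ℕ) : ℚ⟦X⟧) = PowerSeries.C ((j:ℚ)+1) := by
      rw [map_add, map_one, map_natCast, Nat.cast_add, Nat.cast_one]
    rw [hC, mul_pow]
    ring
  have L1 : ∀ M : ℕ, ∑ j ∈ range (M+1), ((j:ℚ)+1) * b (j+1) * coeff M (T j)
      = if M = 0 then 1 else 0 := by
    intro M
    have hterm : ∀ j : ℕ, ((j:ℚ)+1) * coeff M (T j)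
        = coeff (M+1) ((X*u)^(j+1)) * ((M:ℚ)+1) := by
      intro j
      have h1 := coeff_derivative ((X*u)^(j+1)) M
      rw [hT j, coeff_C_mul] at h1
      rw [h1]
    calc ∑ j ∈ range (M+1), ((j:ℚ)+1) * b (j+1) * coeff M (T j)
        = ∑ j ∈ range (M+1), b (j+1) * (((j:ℚ)+1) * coeff M (T j)) := by
          exact Finset.sum_congr rfl fun j _ => by ring
      _ = ((M:ℚ)+1) * ∑ j ∈ range (M+1), b (j+1) * coeff (M+1) ((X*u)^(j+1)) := by
          rw [Finset.mul_sum]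
          exact Finset.sum_congr rfl fun j _ => by rw [hterm j]; ring
      _ = ((M:ℚ)+1) * ∑ k ∈ range (M+2), b k * coeff (M+1) ((X*u)^k) := by
          congr 1
          rw [Finset.sum_range_succ' (fun k => b k * coeff (M+1) ((X*u)^k)) (M+1)]
          simp [hb0]
      _ = ((M:ℚ)+1) * (if M + 1 = 1 then 1 else 0) := by rw [R (M+1)]
      _ = if M = 0 then 1 else 0 := by
          rcases M with _ | M <;> simp
  -- the key identity
  have key : ∀ n : ℕ, 1 ≤ n → coeff n (φ^(n+1)) = ((n:ℚ)+1) * b (n+1) := by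
    intro n hn
    have heval : ∀ j ∈ range (n+1), coeff n (T j * φ^(n+1)) = if j = n then 1 else 0 := by
      intro j hj
      rw [mem_range, Nat.lt_succ_iff] at hj
      by_cases hjn : j = n
      · subst hjn
        have hcollapse : T j * φ^(j+1) = X^j * ((φ - X*Dφ) * u) := by
          have h2 : u^(j+2) * φ^(j+1) = u := by
            calc u^(j+2) * φ^(j+1) = u * (φ*u)^(j+1) := by ring
              _ = u := by rw [hu1, one_pow, mul_one]
          calc T j * φ^(j+1) = X^j * ((φ - X*Dφ) * (u^(j+2) * φ^(j+1))) := by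
                rw [hTdef]; ring
            _ = X^j * ((φ - X*Dφ) * u) := by rw [h2]
        rw [hcollapse, if_pos rfl, coeff_X_pow_mul' _ j j, if_pos le_rfl, Nat.sub_self,
          coeff_zero_eq_constantCoeff, map_mul, map_sub, hφ0, map_mul,
          constantCoeff_X, zero_mul, sub_zero, hu0, one_mul]
      · rw [if_neg hjn]
        have hjlt : j < n := lt_of_le_of_ne hj hjn
        obtain ⟨m, hm⟩ : ∃ m, n - j = m := ⟨n - j, rfl⟩
        have hm1 : 1 ≤ m := by omega
        have hsplit : u^(j+2) * φ^(n+1) = φ^(m-1) := by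
          have h3 : φ^(n+1) = φ^(j+2) * φ^(m-1) := by
            rw [← pow_add, show j+2+(m-1) = n+1 by omega]
          calc u^(j+2) * φ^(n+1) = (φ*u)^(j+2) * φ^(m-1) := by rw [h3]; ring
            _ = φ^(m-1) := by rw [hu1, one_pow, one_mul]
        have hTj : T j * φ^(n+1) = X^j * (φ^m - X * (Dφ * φ^(m-1))) := by
          calc T j * φ^(n+1) = X^j * ((φ - X*Dφ) * (u^(j+2) * φ^(n+1))) := by
                rw [hTdef]; ring
            _ = X^j * ((φ - X*Dφ) * φ^(m-1)) := by rw [hsplit]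
            _ = X^j * (φ * φ^(m-1) - X * (Dφ * φ^(m-1))) := by ring
            _ = X^j * (φ^m - X * (Dφ * φ^(m-1))) := by
                rw [← pow_succ', show m-1+1 = m by omega]
        rw [hTj, coeff_X_pow_mul' _ j n, if_pos (le_of_lt hjlt), map_sub]
        have hnj : n - j = m := hm
        have hnj : n - j = m := hm
        have hDpow : coeff (m-1) (Dφ * φ^(m-1)) = coeff m (φ^m) := by
          have h4 : d⁄dX ℚ (φ^m) = (m : ℚ⟦X⟧) * (φ^(m-1) * Dφ) := by
            rw [Derivation.leibniz_pow (d⁄dX ℚ) φ m, smul_eq_mul, nsmul_eq_mul, hDφ]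
          have h5 := coeff_derivative (φ^m) (m-1)
          rw [h4] at h5
          have h6 : m - 1 + 1 = m := by omega
          rw [h6] at h5
          have hC : ((m : ℕ) : ℚ⟦X⟧) = PowerSeries.C ((m:ℚ)) := by rw [map_natCast]
          rw [hC, coeff_C_mul] at h5
          have hmne : (m : ℚ) ≠ 0 := Nat.cast_ne_zero.mpr (by omega)
          have h9 : ((m-1 : ℕ) : ℚ) + 1 = (m : ℚ) := by exact_mod_cast h6
          rw [h9] at h5
          have h10 : (m:ℚ) * coeff (m-1) (φ^(m-1) * Dφ)
              = (m:ℚ) * coeff m (φ^m) := by rw [h5]; ring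
          have h7 := mul_left_cancel₀ hmne h10
          rw [mul_comm Dφ (φ^(m-1)), h7]
        have hXm : coeff (n-j) (X * (Dφ * φ^(m-1))) = coeff (m-1) (Dφ * φ^(m-1)) := by
          have h8 : n - j = (m-1) + 1 := by omega
          rw [h8, coeff_succ_X_mul]
        rw [hXm, hDpow, hnj, sub_self]
    -- main chain
    have hchain : coeff n (φ^(n+1))
        = ∑ j ∈ range (n+1), ((j:ℚ)+1) * b (j+1) * coeff n (T j * φ^(n+1)) := by
      have step1 : coeff n (φ^(n+1))
          = ∑ M ∈ range (n+1), (if M = 0 then (1:ℚ) else 0) * coeff (n-M) (φ^(n+1)) := by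
        symm
        rw [Finset.sum_eq_single 0]
        · simp
        · intro j _ hne; rw [if_neg hne, zero_mul]
        · intro h; exact absurd (mem_range.mpr (Nat.succ_pos n)) h
      rw [step1]
      have step2 : ∀ M ∈ range (n+1),
          (if M = 0 then (1:ℚ) else 0) * coeff (n-M) (φ^(n+1))
          = ∑ j ∈ range (n+1), ((j:ℚ)+1) * b (j+1) * coeff M (T j)
              * coeff (n-M) (φ^(n+1)) := by
        intro M hM
        rw [← L1 M, Finset.sum_mul]
        apply Finset.sum_subset
        · exact Finset.range_subset_range.mpr (by rw [mem_range] at hM; omega)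
        · intro j _ hj
          rw [mem_range, Nat.lt_succ_iff, not_le] at hj
          simp only [hTdef]
          rw [coeff_X_pow_mul' _ j M, if_neg (by omega)]
          ring
      rw [Finset.sum_congr rfl step2, Finset.sum_comm]
      refine Finset.sum_congr rfl fun j _ => ?_
      rw [coeff_mul, Finset.Nat.sum_antidiagonal_eq_sum_range_succ_mk, Finset.mul_sum]
      exact Finset.sum_congr rfl fun M _ => by ring
    rw [hchain, Finset.sum_congr rfl (fun j hj => by rw [heval j hj])]
    rw [Finset.sum_eq_single n]
    · rw [if_pos rfl, mul_one]
    · intro j _ hne; rw [if_neg hne, mul_zero]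
    · intro h; exact absurd (mem_range.mpr (Nat.lt_succ_self n)) h
  refine ⟨(hbv 1).symm.trans hb1, fun n hn => ?_⟩
  have hkey := key n hn
  have hC := lagrange_stepC a A hA n
  rw [← hφ] at hC
  rw [hkey] at hC
  rw [hbv (n+1)] at hC
  have hne : ((n:ℚ)+1) ≠ 0 := by positivity
  field_simp at hC ⊢
  linarith [hC]

/-- Lagrange inversion: if `B = ∑ bₙxⁿ` is the compositional inverse of
`x/(1+A(x))` where `A = ∑_{n≥1} aₙxⁿ`, then `b₁ = 1` and for `n ≥ 1`,
`b_{n+1} = (1/(n+1)) ∑ multinomial(n+1; n+1-∑rᵢ, r₁,…,rₙ) a₁^{r₁}⋯aₙ^{rₙ}`,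
summed over partitions `1^{r₁}⋯n^{rₙ} ⊢ n`. -/
theorem lagrange_inversion_revertReciprocal (a : ℕ → ℚ) (B : PowerSeries ℚ)
    (A : PowerSeries ℚ) (hA : A = PowerSeries.mk fun n => if n = 0 then 0 else a n)
    (hBl : psComp B (PowerSeries.X * (1 + A)⁻¹) = PowerSeries.X)
    (hBr : psComp (PowerSeries.X * (1 + A)⁻¹) B = PowerSeries.X) :
    PowerSeries.coeff 1 B = 1 ∧
      ∀ n : ℕ, 1 ≤ n →
        PowerSeries.coeff (n + 1) B = (1 / (n + 1 : ℚ)) * pSum n a :=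
  lagrange_aux a B A hA hBl
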